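/- Let λ₀, λ₁ : [0,∞) → [0,∞) with λ₁ = e^ψ λ₀, survival functions s₁, s₀ > 0, h(1)h(0) < 0, and bounded measurable g̃(d, y) for d ∈ {0,1}. Then pointwise in y: λ₁(y)s₁(y)g̃(1,y)h(1) − λ₀(y)s₀(y)g̃(0,y)h(0) − [ ( h(1)λ₁(y)s₁(y) − h(0)λ₀(y)s₀(y) ) ( s₁(y)e^ψ h(1) g̃(1,y) − s₀(y) h(0) g̃(0,y) ) ] / [ h(1)e^ψ s₁(y) − h(0)s₀(y) ] = 0. -/

import Mathlib

open Real

/-- Pointwise identity proving Theorem 2: replacing D with an arbitrary bounded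
measurable g̃(D,y) keeps the weighted estimating function unbiased. -/
theorem pointwise_generalized_score_identity
    (lam₁ lam₀ s₁ s₀ : ℝ → ℝ) (gt : ℝ → ℝ → ℝ) (ψ h1 h0 : ℝ)
    (hlam₁ : ∀ y, 0 ≤ lam₁ y) (hlam₀ : ∀ y, 0 ≤ lam₀ y)
    (hs₁ : ∀ y, 0 < s₁ y) (hs₀ : ∀ y, 0 < s₀ y)
    (hgt : Measurable fun p : ℝ × ℝ => gt p.1 p.2)
    (hgtbdd : ∃ C, ∀ d y, |gt d y| ≤ C)
    (hph : ∀ y, lam₁ y = Real.exp ψ * lam₀ y)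
    (hh : h1 * h0 < 0) :
    ∀ y, lam₁ y * s₁ y * gt 1 y * h1 - lam₀ y * s₀ y * gt 0 y * h0 -
        (h1 * lam₁ y * s₁ y - h0 * lam₀ y * s₀ y) *
          (s₁ y * Real.exp ψ * h1 * gt 1 y - s₀ y * h0 * gt 0 y) /
          (h1 * Real.exp ψ * s₁ y - h0 * s₀ y) = 0 := by
  intro y
  have he : 0 < Real.exp ψ := Real.exp_pos ψ
  have hD : h1 * Real.exp ψ * s₁ y - h0 * s₀ y ≠ 0 := by
    rcases lt_or_gt_of_ne (fun h => by simp [h] at hh : h1 ≠ 0) with h1neg | h1pos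
    · have h0pos : 0 < h0 := by nlinarith
      have t1 : h1 * Real.exp ψ * s₁ y < 0 :=
        mul_neg_of_neg_of_pos (mul_neg_of_neg_of_pos h1neg he) (hs₁ y)
      have t2 : 0 < h0 * s₀ y := mul_pos h0pos (hs₀ y)
      have : h1 * Real.exp ψ * s₁ y - h0 * s₀ y < 0 := by linarith
      linarith
    · have h0neg : h0 < 0 := by nlinarith
      have t1 : 0 < h1 * Real.exp ψ * s₁ y :=
        mul_pos (mul_pos h1pos he) (hs₁ y)
      have t2 : h0 * s₀ y < 0 := mul_neg_of_neg_of_pos h0neg (hs₀ y)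
      have : 0 < h1 * Real.exp ψ * s₁ y - h0 * s₀ y := by linarith
      linarith
  rw [hph y]
  rw [sub_eq_zero, eq_div_iff hD]
  ring
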